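/- For every SIN group G, the convolution map (m, n) ↦ m ∗ n is jointly continuous on norm-bounded subsets of LUC(G)* when LUC(G)* carries the UEB topology. -/

import Mathlib

noncomputable section
set_option linter.unusedSectionVars false

open Filter Topology MeasureTheory BoundedContinuousFunction

section Defs

variable (G : Type*) [Group G] [TopologicalSpace G] [IsTopologicalGroup G]

/-- A bounded left uniformly continuous function on a topological group. -/
def IsLUCFun (f : G → ℂ) : Prop :=
  (∃ C, ∀ s, ‖f s‖ ≤ C) ∧
    ∀ ε > 0, ∃ U ∈ 𝓝 (1 : G), ∀ s t : G, s * t⁻¹ ∈ U → ‖f s - f t‖ < ε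

/-- A set of functions is equi-LUC if it is uniformly bounded in the sup norm and
equi-uniformly continuous for the right uniformity. -/
def EquiLUCFun (F : Set (G → ℂ)) : Prop :=
  (∃ C, ∀ f ∈ F, ∀ s, ‖f s‖ ≤ C) ∧
    ∀ ε > 0, ∃ U ∈ 𝓝 (1 : G), ∀ f ∈ F, ∀ s t : G, s * t⁻¹ ∈ U → ‖f s - f t‖ < ε

/-- A SIN group: there is a base of neighbourhoods of the identity that are
invariant under all inner automorphisms. -/
def IsSIN : Prop :=
  ∀ U ∈ 𝓝 (1 : G), ∃ V ∈ 𝓝 (1 : G), V ⊆ U ∧ ∀ x : G, ∀ v ∈ V, x * v * x⁻¹ ∈ V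

end Defs

section LUCSpace

variable (G : Type*) [Group G] [TopologicalSpace G] [IsTopologicalGroup G]

/-- The space `LUC(G)` of bounded left uniformly continuous complex functions on `G`,
as a subspace of the bounded continuous functions with the sup norm. -/
def LUC : Submodule ℂ (G →ᵇ ℂ) where
  carrier := {f | ∀ ε > 0, ∃ U ∈ 𝓝 (1 : G), ∀ s t : G, s * t⁻¹ ∈ U → ‖f s - f t‖ < ε}
  zero_mem' := fun ε hε => ⟨Set.univ, Filter.univ_mem, fun s t _ => by simpa using hε⟩
  add_mem' := by
    intro f g hf hg ε hε
    obtain ⟨U, hU, hUf⟩ := hf (ε / 2) (by linarith)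
    obtain ⟨V, hV, hVg⟩ := hg (ε / 2) (by linarith)
    refine ⟨U ∩ V, Filter.inter_mem hU hV, fun s t hst => ?_⟩
    have h1 := hUf s t hst.1
    have h2 := hVg s t hst.2
    have e : (f + g) s - (f + g) t = (f s - f t) + (g s - g t) := by
      simp only [BoundedContinuousFunction.coe_add, Pi.add_apply]; ring
    calc ‖(f + g) s - (f + g) t‖ ≤ ‖f s - f t‖ + ‖g s - g t‖ := by
          rw [e]; exact norm_add_le _ _
      _ < ε := by linarith
  smul_mem' := by
    intro c f hf ε hε
    obtain ⟨U, hU, hUf⟩ := hf (ε / (‖c‖ + 1)) (by positivity)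
    refine ⟨U, hU, fun s t hst => ?_⟩
    have h := hUf s t hst
    have e : (c • f) s - (c • f) t = c * (f s - f t) := by
      simp only [BoundedContinuousFunction.coe_smul, Pi.smul_apply, smul_eq_mul]; ring
    rw [e, norm_mul]
    calc ‖c‖ * ‖f s - f t‖ ≤ ‖c‖ * (ε / (‖c‖ + 1)) :=
          mul_le_mul_of_nonneg_left h.le (norm_nonneg c)
      _ < (‖c‖ + 1) * (ε / (‖c‖ + 1)) :=
          mul_lt_mul_of_pos_right (by linarith) (by positivity)
      _ = ε := by field_simp

/-- Equi-LUC subsets of the space `LUC(G)`. -/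
def EquiLUC (F : Set ↥(LUC G)) : Prop :=
  (∃ C, ∀ f ∈ F, ‖f‖ ≤ C) ∧
    ∀ ε > 0, ∃ U ∈ 𝓝 (1 : G), ∀ f ∈ F, ∀ s t : G,
      s * t⁻¹ ∈ U → ‖(f : G →ᵇ ℂ) s - (f : G →ᵇ ℂ) t‖ < ε

variable {G}

lemma lTrans_mem (s : G) {f : G →ᵇ ℂ} (hf : f ∈ LUC G) :
    f.compContinuous ⟨fun x => s * x, by continuity⟩ ∈ LUC G := by
  intro ε hε
  obtain ⟨U, hU, hUf⟩ := hf ε hε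
  refine ⟨(fun u => s * u * s⁻¹) ⁻¹' U, ?_, ?_⟩
  · have hc : ContinuousAt (fun u : G => s * u * s⁻¹) 1 := by fun_prop
    exact hc.preimage_mem_nhds (by simpa using hU)
  · intro x y hxy
    have h' : (s * x) * (s * y)⁻¹ ∈ U := by
      have h'' : s * (x * y⁻¹) * s⁻¹ ∈ U := hxy
      simpa [mul_inv_rev, mul_assoc] using h''
    exact hUf (s * x) (s * y) h'

/-- Left translation `ℓ_s f (x) = f (s x)` on `LUC(G)`. -/
def lTrans (s : G) (f : ↥(LUC G)) : ↥(LUC G) :=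
  ⟨(f : G →ᵇ ℂ).compContinuous ⟨fun x => s * x, by continuity⟩, lTrans_mem s f.2⟩

@[simp] lemma lTrans_apply (s : G) (f : ↥(LUC G)) (x : G) :
    ((lTrans s f : ↥(LUC G)) : G →ᵇ ℂ) x = (f : G →ᵇ ℂ) (s * x) := rfl

variable (G) in
/-- The dual Banach space `LUC(G)*`. -/
abbrev LUCDual := StrongDual ℂ ↥(LUC G)

lemma lTrans_norm_le (s : G) (f : ↥(LUC G)) : ‖lTrans s f‖ ≤ ‖f‖ :=
  BoundedContinuousFunction.norm_compContinuous_le _ _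

lemma lTrans_add (s : G) (f g : ↥(LUC G)) :
    lTrans s (f + g) = lTrans s f + lTrans s g := by
  apply Subtype.ext; ext x; rfl

lemma lTrans_smul (s : G) (c : ℂ) (f : ↥(LUC G)) :
    lTrans s (c • f) = c • lTrans s f := by
  apply Subtype.ext; ext x; rfl

lemma luccond_continuous {g : G → ℂ}
    (h : ∀ ε > 0, ∃ U ∈ 𝓝 (1 : G), ∀ s t : G, s * t⁻¹ ∈ U → ‖g s - g t‖ < ε) :
    Continuous g := by
  rw [continuous_iff_continuousAt]
  intro t
  rw [ContinuousAt, Metric.tendsto_nhds]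
  intro ε hε
  obtain ⟨U, hU, hUf⟩ := h ε hε
  have hmem : {s : G | s * t⁻¹ ∈ U} ∈ 𝓝 t := by
    have hc : ContinuousAt (fun s : G => s * t⁻¹) t := by fun_prop
    exact hc.preimage_mem_nhds (by simpa using hU)
  filter_upwards [hmem] with s hs
  rw [dist_eq_norm]
  exact hUf s t hs

lemma rAct_cond (n : LUCDual G) (f : ↥(LUC G)) :
    ∀ ε > 0, ∃ U ∈ 𝓝 (1 : G), ∀ s t : G, s * t⁻¹ ∈ U →
      ‖n (lTrans s f) - n (lTrans t f)‖ < ε := by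
  intro ε hε
  set δ := ε / (2 * (‖n‖ + 1)) with hδdef
  have hδ : 0 < δ := by positivity
  obtain ⟨U, hU, hUf⟩ := f.2 δ hδ
  refine ⟨U, hU, fun s t hst => ?_⟩
  have hdiff : ‖lTrans s f - lTrans t f‖ ≤ δ := by
    have : ‖((lTrans s f : ↥(LUC G)) : G →ᵇ ℂ) - ((lTrans t f : ↥(LUC G)) : G →ᵇ ℂ)‖ ≤ δ := by
      apply BoundedContinuousFunction.norm_le hδ.le |>.2
      intro x
      have hx : (s * x) * (t * x)⁻¹ ∈ U := by
        simpa [mul_inv_rev, mul_assoc] using hst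
      simpa using (hUf (s * x) (t * x) hx).le
    exact this
  calc ‖n (lTrans s f) - n (lTrans t f)‖ = ‖n (lTrans s f - lTrans t f)‖ := by
        rw [map_sub]
    _ ≤ ‖n‖ * ‖lTrans s f - lTrans t f‖ := n.le_opNorm _
    _ ≤ ‖n‖ * δ := mul_le_mul_of_nonneg_left hdiff (norm_nonneg n)
    _ < (‖n‖ + 1) * δ := mul_lt_mul_of_pos_right (by linarith) hδ
    _ = ε / 2 := by rw [hδdef]; field_simp
    _ < ε := by linarith

/-- The function `r_n f : s ↦ n (ℓ_s f)`, as an element of `LUC(G)`. -/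
def rAct (n : LUCDual G) (f : ↥(LUC G)) : ↥(LUC G) :=
  ⟨BoundedContinuousFunction.ofNormedAddCommGroup (fun s => n (lTrans s f))
      (luccond_continuous (rAct_cond n f))
      (‖n‖ * ‖f‖)
      (fun s => by
        calc ‖n (lTrans s f)‖ ≤ ‖n‖ * ‖lTrans s f‖ := n.le_opNorm _
          _ ≤ ‖n‖ * ‖f‖ := mul_le_mul_of_nonneg_left (lTrans_norm_le s f) (norm_nonneg n)),
   fun ε hε => by
      obtain ⟨U, hU, h⟩ := rAct_cond n f ε hε
      exact ⟨U, hU, fun s t hst => h s t hst⟩⟩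

@[simp] lemma rAct_apply (n : LUCDual G) (f : ↥(LUC G)) (s : G) :
    ((rAct n f : ↥(LUC G)) : G →ᵇ ℂ) s = n (lTrans s f) := rfl

lemma rAct_norm_le (n : LUCDual G) (f : ↥(LUC G)) : ‖rAct n f‖ ≤ ‖n‖ * ‖f‖ := by
  have h0 : (0 : ℝ) ≤ ‖n‖ * ‖f‖ := by positivity
  show ‖((rAct n f : ↥(LUC G)) : G →ᵇ ℂ)‖ ≤ ‖n‖ * ‖f‖
  refine (BoundedContinuousFunction.norm_le h0).2 fun s => ?_
  calc ‖n (lTrans s f)‖ ≤ ‖n‖ * ‖lTrans s f‖ := n.le_opNorm _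
    _ ≤ ‖n‖ * ‖f‖ := mul_le_mul_of_nonneg_left (lTrans_norm_le s f) (norm_nonneg n)

lemma rAct_add (n : LUCDual G) (f g : ↥(LUC G)) :
    rAct n (f + g) = rAct n f + rAct n g := by
  apply Subtype.ext
  ext s
  simp [rAct_apply, lTrans_add, map_add]

lemma rAct_smul (n : LUCDual G) (c : ℂ) (f : ↥(LUC G)) :
    rAct n (c • f) = c • rAct n f := by
  apply Subtype.ext
  ext s
  simp [rAct_apply, lTrans_smul, _root_.map_smul]

/-- Convolution on `LUC(G)*`: `(m ∗ n)(f) = m (r_n f)`. -/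
def conv (m n : LUCDual G) : LUCDual G :=
  LinearMap.mkContinuous
    { toFun := fun f => m (rAct n f)
      map_add' := by
        intro f g
        show m (rAct n (f + g)) = m (rAct n f) + m (rAct n g)
        rw [rAct_add, map_add]
      map_smul' := by
        intro c f
        show m (rAct n (c • f)) = c • m (rAct n f)
        rw [rAct_smul, _root_.map_smul] }
    (‖m‖ * ‖n‖)
    (fun f => by
      calc ‖m (rAct n f)‖ ≤ ‖m‖ * ‖rAct n f‖ := m.le_opNorm _
        _ ≤ ‖m‖ * (‖n‖ * ‖f‖) :=
            mul_le_mul_of_nonneg_left (rAct_norm_le n f) (norm_nonneg m)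
        _ = ‖m‖ * ‖n‖ * ‖f‖ := by ring)

@[simp] lemma conv_apply (m n : LUCDual G) (f : ↥(LUC G)) :
    conv m n f = m (rAct n f) := rfl

variable (G) in
/-- Convergence of a net in the UEB topology on `LUC(G)*`:
uniform convergence on every equi-LUC set. -/
def UEBTendsto {ι : Type*} (l : Filter ι) (m : ι → LUCDual G) (m₀ : LUCDual G) : Prop :=
  ∀ F : Set ↥(LUC G), EquiLUC G F → ∀ ε > 0, ∀ᶠ i in l, ∀ f ∈ F, ‖m i f - m₀ f‖ < ε

variable (G) in
/-- The UEB topology on `LUC(G)*`: the topology of uniform convergence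
on the equi-LUC subsets of `LUC(G)`. -/
def UEBTop : TopologicalSpace (LUCDual G) :=
  ⨅ F : {F : Set ↥(LUC G) // EquiLUC G F},
    TopologicalSpace.induced
      (fun m => UniformFun.ofFun (fun f : F.1 => m f.1) : LUCDual G → UniformFun F.1 ℂ)
      inferInstance

end LUCSpace

section Aux

variable {G : Type*} [Group G] [TopologicalSpace G] [IsTopologicalGroup G]

/-- Basic UEB neighbourhoods are neighbourhoods. -/
lemma mem_nhds_UEB {F : Set ↥(LUC G)} (hF : EquiLUC G F) (m₀ : LUCDual G) {ε : ℝ}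
    (hε : 0 < ε) :
    {m : LUCDual G | ∀ f ∈ F, ‖m f - m₀ f‖ < ε} ∈ @nhds _ (UEBTop G) m₀ := by
  rw [UEBTop, _root_.nhds_iInf]
  refine mem_iInf_of_mem ⟨F, hF⟩ ?_
  rw [nhds_induced]
  refine Filter.mem_comap.2
    ⟨{g | ((UniformFun.ofFun fun f : F => m₀ f.1), g) ∈
        UniformFun.gen F ℂ {p : ℂ × ℂ | dist p.1 p.2 < ε}}, ?_, ?_⟩
  · exact (UniformFun.hasBasis_nhds F ℂ _).mem_of_mem (Metric.dist_mem_uniformity hε)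
  · intro m hm f hf
    have := hm ⟨f, hf⟩
    simpa [dist_eq_norm, norm_sub_rev] using this

/-- The image of an equi-LUC set under `rAct` over a norm-bounded set of functionals
is equi-LUC. -/
lemma equiLUC_rAct {F : Set ↥(LUC G)} (hF : EquiLUC G F) {B : Set (LUCDual G)} {C : ℝ}
    (hC : ∀ n ∈ B, ‖n‖ ≤ C) :
    EquiLUC G {g | ∃ n ∈ B, ∃ f ∈ F, g = rAct n f} := by
  obtain ⟨⟨D, hD⟩, hFe⟩ := hF
  constructor
  · refine ⟨max C 0 * max D 0, ?_⟩
    rintro g ⟨n, hn, f, hf, rfl⟩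
    calc ‖rAct n f‖ ≤ ‖n‖ * ‖f‖ := rAct_norm_le n f
      _ ≤ max C 0 * max D 0 :=
          mul_le_mul ((hC n hn).trans (le_max_left _ _)) ((hD f hf).trans (le_max_left _ _))
            (norm_nonneg _) (le_max_right _ _)
  · intro ε hε
    obtain ⟨U, hU, hUe⟩ := hFe (ε / (max C 0 + 1)) (by positivity)
    refine ⟨U, hU, ?_⟩
    rintro g ⟨n, hn, f, hf, rfl⟩ s t hst
    have hδ : (0:ℝ) < ε / (max C 0 + 1) := by positivity
    have hdiff : ‖lTrans s f - lTrans t f‖ ≤ ε / (max C 0 + 1) := by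
      have : ‖((lTrans s f : ↥(LUC G)) : G →ᵇ ℂ) - ((lTrans t f : ↥(LUC G)) : G →ᵇ ℂ)‖ ≤
          ε / (max C 0 + 1) := by
        apply BoundedContinuousFunction.norm_le hδ.le |>.2
        intro x
        have hx : (s * x) * (t * x)⁻¹ ∈ U := by
          simpa [mul_inv_rev, mul_assoc] using hst
        simpa using (hUe f hf (s * x) (t * x) hx).le
      exact this
    have h1 : ((rAct n f : ↥(LUC G)) : G →ᵇ ℂ) s - ((rAct n f : ↥(LUC G)) : G →ᵇ ℂ) t =
        n (lTrans s f - lTrans t f) := by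
      simp [rAct_apply, map_sub]
    rw [h1]
    calc ‖n (lTrans s f - lTrans t f)‖ ≤ ‖n‖ * ‖lTrans s f - lTrans t f‖ := n.le_opNorm _
      _ ≤ max C 0 * (ε / (max C 0 + 1)) :=
          mul_le_mul ((hC n hn).trans (le_max_left _ _)) hdiff (norm_nonneg _)
            (le_max_right _ _)
      _ < (max C 0 + 1) * (ε / (max C 0 + 1)) :=
          mul_lt_mul_of_pos_right (by linarith) hδ
      _ = ε := by field_simp

/-- For SIN groups, the set of all left translates of an equi-LUC set is equi-LUC. -/
lemma equiLUC_lTrans (hSIN : IsSIN G) {F : Set ↥(LUC G)} (hF : EquiLUC G F) :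
    EquiLUC G {g | ∃ s : G, ∃ f ∈ F, g = lTrans s f} := by
  obtain ⟨⟨D, hD⟩, hFe⟩ := hF
  constructor
  · exact ⟨D, by rintro g ⟨s, f, hf, rfl⟩; exact (lTrans_norm_le s f).trans (hD f hf)⟩
  · intro ε hε
    obtain ⟨U, hU, hUe⟩ := hFe ε hε
    obtain ⟨V, hV, hVU, hVconj⟩ := hSIN U hU
    refine ⟨V, hV, ?_⟩
    rintro g ⟨s, f, hf, rfl⟩ x y hxy
    have hx : (s * x) * (s * y)⁻¹ ∈ U := by
      refine hVU ?_
      have := hVconj s (x * y⁻¹) hxy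
      simpa [mul_inv_rev, mul_assoc] using this
    simpa using hUe f hf (s * x) (s * y) hx

lemma rAct_sub_norm_le {n n₀ : LUCDual G} {f : ↥(LUC G)} {δ : ℝ} (hδ : 0 ≤ δ)
    (h : ∀ s : G, ‖n (lTrans s f) - n₀ (lTrans s f)‖ ≤ δ) :
    ‖rAct n f - rAct n₀ f‖ ≤ δ := by
  have : ‖((rAct n f : ↥(LUC G)) : G →ᵇ ℂ) - ((rAct n₀ f : ↥(LUC G)) : G →ᵇ ℂ)‖ ≤ δ := by
    apply BoundedContinuousFunction.norm_le hδ |>.2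
    intro s
    simpa using h s
  exact this

end Aux

/-- **Corollary (paper Cor 5.6).** For every SIN group, convolution is jointly UEB
continuous on norm-bounded subsets of `LUC(G)*`. -/
theorem conv_UEB_jointly_continuous_on_bounded_of_SIN
    (G : Type*) [Group G] [TopologicalSpace G] [IsTopologicalGroup G]
    (hSIN : IsSIN G)
    (B₁ B₂ : Set (LUCDual G))
    (hb₁ : ∃ C, ∀ m ∈ B₁, ‖m‖ ≤ C) (hb₂ : ∃ C, ∀ m ∈ B₂, ‖m‖ ≤ C) :
    @ContinuousOn (LUCDual G × LUCDual G) (LUCDual G)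
      (@instTopologicalSpaceProd _ _ (UEBTop G) (UEBTop G)) (UEBTop G)
      (fun p => conv p.1 p.2) (B₁ ×ˢ B₂) := by
  obtain ⟨C₂, hC₂⟩ := hb₂
  letI : TopologicalSpace (LUCDual G) := UEBTop G
  rintro ⟨m₀, n₀⟩ ⟨hm₀, hn₀⟩
  rw [ContinuousWithinAt]
  have hnhds : @nhds (LUCDual G) (UEBTop G) (conv m₀ n₀) =
      ⨅ F : {F : Set ↥(LUC G) // EquiLUC G F},
        Filter.comap (fun m : LUCDual G => (UniformFun.ofFun fun f : F.1 => m f.1))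
          (𝓝 (UniformFun.ofFun fun f : F.1 => conv m₀ n₀ f.1)) := by
    rw [UEBTop, _root_.nhds_iInf]
    simp only [nhds_induced]
  rw [hnhds, Filter.tendsto_iInf]
  rintro ⟨F, hF⟩
  rw [Filter.tendsto_comap_iff]
  have : ((fun m : LUCDual G => (UniformFun.ofFun fun f : F => m f.1)) ∘
      fun p : LUCDual G × LUCDual G => conv p.1 p.2) =
      fun p : LUCDual G × LUCDual G => UniformFun.ofFun fun f : F => conv p.1 p.2 f.1 := rfl
  rw [this, UniformFun.tendsto_iff_tendstoUniformly, Metric.tendstoUniformly_iff]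
  intro ε hε
  set F' : Set ↥(LUC G) := {g | ∃ n ∈ B₂, ∃ f ∈ F, g = rAct n f} with hF'def
  set F'' : Set ↥(LUC G) := {g | ∃ s : G, ∃ f ∈ F, g = lTrans s f} with hF''def
  have hF' : EquiLUC G F' := equiLUC_rAct hF hC₂
  have hF'' : EquiLUC G F'' := equiLUC_lTrans hSIN hF
  set δ : ℝ := ε / (2 * (‖m₀‖ + 1)) with hδdef
  have hδ : 0 < δ := by positivity
  have hS₁ := mem_nhds_UEB hF' m₀ (show (0:ℝ) < ε / 2 by linarith)
  have hS₂ := mem_nhds_UEB hF'' n₀ hδ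
  have hS : {m : LUCDual G | ∀ f ∈ F', ‖m f - m₀ f‖ < ε / 2} ×ˢ
      {n : LUCDual G | ∀ f ∈ F'', ‖n f - n₀ f‖ < δ} ∈ 𝓝 ((m₀, n₀) : LUCDual G × LUCDual G) :=
    prod_mem_nhds hS₁ hS₂
  filter_upwards [mem_nhdsWithin_of_mem_nhds hS, self_mem_nhdsWithin] with p hpS hpB
  obtain ⟨m, n⟩ := p
  obtain ⟨h1, h2⟩ := hpS
  obtain ⟨hmB, hnB⟩ := hpB
  rintro ⟨f, hf⟩
  -- first term
  have ht1 : ‖m (rAct n f) - m₀ (rAct n f)‖ < ε / 2 :=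
    h1 (rAct n f) ⟨n, hnB, f, hf, rfl⟩
  -- second term
  have hd : ‖rAct n₀ f - rAct n f‖ ≤ δ := by
    refine rAct_sub_norm_le hδ.le fun s => ?_
    have := h2 (lTrans s f) ⟨s, f, hf, rfl⟩
    rw [norm_sub_rev] at this
    exact this.le
  have ht2 : ‖m₀ (rAct n₀ f) - m₀ (rAct n f)‖ < ε / 2 := by
    calc ‖m₀ (rAct n₀ f) - m₀ (rAct n f)‖ = ‖m₀ (rAct n₀ f - rAct n f)‖ := by rw [map_sub]
      _ ≤ ‖m₀‖ * ‖rAct n₀ f - rAct n f‖ := m₀.le_opNorm _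
      _ ≤ ‖m₀‖ * δ := mul_le_mul_of_nonneg_left hd (norm_nonneg m₀)
      _ < (‖m₀‖ + 1) * δ := mul_lt_mul_of_pos_right (by linarith) hδ
      _ = ε / 2 := by rw [hδdef]; field_simp
  have key : ‖conv m₀ n₀ f - conv m n f‖ < ε := by
    have e : conv m₀ n₀ f - conv m n f =
        (m₀ (rAct n₀ f) - m₀ (rAct n f)) + (m₀ (rAct n f) - m (rAct n f)) := by
      simp only [conv_apply]; ring
    rw [e]
    calc ‖(m₀ (rAct n₀ f) - m₀ (rAct n f)) + (m₀ (rAct n f) - m (rAct n f))‖ ≤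
        ‖m₀ (rAct n₀ f) - m₀ (rAct n f)‖ + ‖m₀ (rAct n f) - m (rAct n f)‖ := norm_add_le _ _
      _ < ε / 2 + ε / 2 := by
          rw [norm_sub_rev (m₀ (rAct n f))]
          exact add_lt_add ht2 ht1
      _ = ε := by ring
  simpa [dist_eq_norm] using key
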